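/- (Malmsten-type formula) For every s > 0, one has log Γ(1+s) = −γ·s + ∫₀^∞ (e^{−sx} − 1 + s·x)·(x·(eˣ − 1))^{−1} dx, where γ = −Γ′(1) is the Euler–Mascheroni constant. -/

import Mathlib

open MeasureTheory Set Filter Real

open Topology Nat

set_option maxHeartbeats 1000000


lemma integral_exp_neg_mul_Ioi' {t : ℝ} (ht : 0 < t) :
    ∫ x in Ioi (0:ℝ), Real.exp (-(t * x)) = 1 / t := by
  have := Real.integral_rpow_mul_exp_neg_mul_Ioi (a := 1) one_pos ht
  simp only [sub_self, Real.rpow_zero, one_mul, Real.rpow_one, Real.Gamma_one, mul_one] at this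
  have h2 : ∀ x ∈ Ioi (0:ℝ), x ^ (1 - 1 : ℝ) * Real.exp (-(t * x)) = Real.exp (-(t * x)) := by
    intro x hx
    rw [sub_self, Real.rpow_zero, one_mul]
  exact this

lemma frullani_exp {b a : ℝ} (hb : 0 < b) (hba : b < a) :
    ∫ x in Ioi (0:ℝ), (Real.exp (-(b * x)) - Real.exp (-(a * x))) / x = Real.log (a / b) := by
  have ha : 0 < a := hb.trans hba
  -- the two-variable function
  set F : ℝ × ℝ → ℝ := fun p => Real.exp (-(p.2 * p.1)) with hF
  have hFcont : Continuous F := by fun_prop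
  have hprod : (volume.restrict (Ioi (0:ℝ))).prod (volume.restrict (Ioc b a)) =
      (volume.prod volume).restrict ((Ioi (0:ℝ)) ×ˢ (Ioc b a)) := Measure.prod_restrict _ _
  have hg1 : IntegrableOn (fun x : ℝ => Real.exp (-(b * x))) (Ioi (0:ℝ)) volume := by
    have := exp_neg_integrableOn_Ioi 0 hb
    simpa [neg_mul] using this
  have hg2 : IntegrableOn (fun _ : ℝ => (1:ℝ)) (Ioc b a) volume :=
    integrableOn_const measure_Ioc_lt_top.ne
  have hg : Integrable (fun p : ℝ × ℝ => Real.exp (-(b * p.1)) * 1)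
      ((volume.restrict (Ioi (0:ℝ))).prod (volume.restrict (Ioc b a))) :=
    Integrable.mul_prod hg1 hg2
  have hFint : Integrable F ((volume.restrict (Ioi (0:ℝ))).prod (volume.restrict (Ioc b a))) := by
    refine hg.mono' hFcont.aestronglyMeasurable ?_
    · rw [hprod]
      refine (ae_restrict_iff' (measurableSet_Ioi.prod measurableSet_Ioc)).2 (ae_of_all _ ?_)
      rintro ⟨x, t⟩ ⟨hx, hts⟩
      simp only [hF, norm_eq_abs, abs_exp, mul_one]
      exact Real.exp_le_exp.2 (by nlinarith [le_of_lt (mem_Ioi.1 hx), hts.1.le])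
  have swap := MeasureTheory.integral_integral_swap (f := fun x t => F (x, t)) hFint
  -- inner integral over t
  have inner_t : ∀ x ∈ Ioi (0:ℝ),
      (∫ t in Ioc b a, Real.exp (-(t * x))) = (Real.exp (-(b * x)) - Real.exp (-(a * x))) / x := by
    intro x hx
    have hx0 : (0:ℝ) < x := hx
    rw [← intervalIntegral.integral_of_le hba.le]
    have : ∀ t, Real.exp (-(t * x)) = Real.exp (-(x * t)) := fun t => by rw [mul_comm]
    simp_rw [this]
    rw [intervalIntegral.integral_comp_mul_left (fun u => Real.exp (-u)) hx0.ne']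
    have : ∫ u in x*b..x*a, Real.exp (-u) = Real.exp (-(x*b)) - Real.exp (-(x*a)) := by
      have := intervalIntegral.integral_comp_neg (a := x*b) (b := x*a) (fun u => Real.exp u)
      rw [this, integral_exp]
    rw [this]
    rw [smul_eq_mul]; field_simp
  -- inner integral over x
  have inner_x : ∀ t ∈ Ioc b a, (∫ x in Ioi (0:ℝ), Real.exp (-(t * x))) = 1 / t := by
    intro t ht
    exact integral_exp_neg_mul_Ioi' (hb.trans_le ht.1.le)
  calc ∫ x in Ioi (0:ℝ), (Real.exp (-(b * x)) - Real.exp (-(a * x))) / x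
      = ∫ x in Ioi (0:ℝ), ∫ t in Ioc b a, Real.exp (-(t * x)) := by
        refine (setIntegral_congr_fun measurableSet_Ioi ?_).symm
        intro x hx; exact inner_t x hx
    _ = ∫ t in Ioc b a, ∫ x in Ioi (0:ℝ), Real.exp (-(t * x)) := swap
    _ = ∫ t in Ioc b a, 1 / t := setIntegral_congr_fun measurableSet_Ioc inner_x
    _ = Real.log (a / b) := by
        rw [← intervalIntegral.integral_of_le hba.le, integral_one_div]
        intro h
        rcases h with h
        have := Set.mem_uIcc.1 h
        rcases this with ⟨h1, h2⟩ | ⟨h1, h2⟩ <;> linarith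

lemma frullani_integrable {b a : ℝ} (hb : 0 < b) (hba : b < a) :
    IntegrableOn (fun x => (Real.exp (-(b * x)) - Real.exp (-(a * x))) / x) (Ioi (0:ℝ)) := by
  have ha : 0 < a := hb.trans hba
  set F : ℝ × ℝ → ℝ := fun p => Real.exp (-(p.2 * p.1)) with hF
  have hFcont : Continuous F := by fun_prop
  have hprod : (volume.restrict (Ioi (0:ℝ))).prod (volume.restrict (Ioc b a)) =
      (volume.prod volume).restrict ((Ioi (0:ℝ)) ×ˢ (Ioc b a)) := Measure.prod_restrict _ _
  have hg1 : IntegrableOn (fun x : ℝ => Real.exp (-(b * x))) (Ioi (0:ℝ)) volume := by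
    have := exp_neg_integrableOn_Ioi 0 hb
    simpa [neg_mul] using this
  have hg2 : IntegrableOn (fun _ : ℝ => (1:ℝ)) (Ioc b a) volume :=
    integrableOn_const measure_Ioc_lt_top.ne
  have hg : Integrable (fun p : ℝ × ℝ => Real.exp (-(b * p.1)) * 1)
      ((volume.restrict (Ioi (0:ℝ))).prod (volume.restrict (Ioc b a))) :=
    Integrable.mul_prod hg1 hg2
  have hFint : Integrable F ((volume.restrict (Ioi (0:ℝ))).prod (volume.restrict (Ioc b a))) := by
    refine hg.mono' hFcont.aestronglyMeasurable ?_
    · rw [hprod]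
      refine (ae_restrict_iff' (measurableSet_Ioi.prod measurableSet_Ioc)).2 (ae_of_all _ ?_)
      rintro ⟨x, t⟩ ⟨hx, hts⟩
      simp only [hF, norm_eq_abs, abs_exp, mul_one]
      exact Real.exp_le_exp.2 (by nlinarith [le_of_lt (mem_Ioi.1 hx), hts.1.le])
  have h2 := hFint.integral_prod_left
  refine h2.congr ?_
  refine (ae_restrict_iff' measurableSet_Ioi).2 (ae_of_all _ fun x hx => ?_)
  have hx0 : (0:ℝ) < x := hx
  show (∫ t in Ioc b a, Real.exp (-(t * x))) = (Real.exp (-(b * x)) - Real.exp (-(a * x))) / x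
  rw [← intervalIntegral.integral_of_le hba.le]
  have hc : ∀ t, Real.exp (-(t * x)) = Real.exp (-(x * t)) := fun t => by rw [mul_comm]
  simp_rw [hc]
  rw [intervalIntegral.integral_comp_mul_left (fun u => Real.exp (-u)) hx0.ne']
  have h3 : ∫ u in x*b..x*a, Real.exp (-u) = Real.exp (-(x*b)) - Real.exp (-(x*a)) := by
    have := intervalIntegral.integral_comp_neg (a := x*b) (b := x*a) (fun u => Real.exp u)
    rw [this, integral_exp]
  rw [h3]
  rw [smul_eq_mul]; field_simp

lemma term_eval {s b : ℝ} (hs : 0 < s) (hb : 0 < b) :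
    IntegrableOn (fun x => (Real.exp (-(s*x)) - 1 + s*x) * Real.exp (-(b*x)) / x) (Ioi (0:ℝ)) ∧
    ∫ x in Ioi (0:ℝ), (Real.exp (-(s*x)) - 1 + s*x) * Real.exp (-(b*x)) / x
      = s/b - Real.log ((b+s)/b) := by
  have hba : b < b + s := by linarith
  have hfr_int := frullani_integrable hb hba
  have hfr_val := frullani_exp hb hba
  have hexp_int : IntegrableOn (fun x : ℝ => s * Real.exp (-(b * x))) (Ioi (0:ℝ)) := by
    have := exp_neg_integrableOn_Ioi 0 hb
    exact ((by simpa [neg_mul] using this : IntegrableOn (fun x : ℝ => Real.exp (-(b * x)))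
      (Ioi (0:ℝ)) volume)).const_mul s
  have hexp_val : ∫ x in Ioi (0:ℝ), s * Real.exp (-(b * x)) = s * (1/b) := by
    rw [integral_const_mul, integral_exp_neg_mul_Ioi' hb]
  have heq : EqOn (fun x => (Real.exp (-(s*x)) - 1 + s*x) * Real.exp (-(b*x)) / x)
      (fun x => s * Real.exp (-(b * x)) - (Real.exp (-(b * x)) - Real.exp (-((b+s) * x))) / x)
      (Ioi (0:ℝ)) := by
    intro x hx
    have hx0 : (0:ℝ) < x := hx
    have hmul : Real.exp (-(s*x)) * Real.exp (-(b*x)) = Real.exp (-((b+s)*x)) := by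
      rw [← Real.exp_add]; ring_nf
    field_simp
    rw [mul_comm x b, mul_comm x (b+s)]; linear_combination hmul
  constructor
  · exact MeasureTheory.IntegrableOn.congr_fun (hexp_int.sub hfr_int) heq.symm measurableSet_Ioi
  · rw [setIntegral_congr_fun measurableSet_Ioi heq,
      integral_sub hexp_int hfr_int, hexp_val, hfr_val]
    ring

lemma series_eval {s : ℝ} (hs : 0 < s) :
    HasSum (fun n : ℕ => s/((n:ℝ)+1) - Real.log (((n:ℝ)+1+s)/((n:ℝ)+1)))
      (Real.log (Real.Gamma (1+s)) + Real.eulerMascheroniConstant * s) := by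
  set f : ℕ → ℝ := fun n => s/((n:ℝ)+1) - Real.log (((n:ℝ)+1+s)/((n:ℝ)+1)) with hf
  -- bounds on each term
  have hbound : ∀ n : ℕ, 0 ≤ f n ∧ f n ≤ s^2 * (1/((n:ℝ)+1)^2) := by
    intro n
    have hn1 : (0:ℝ) < (n:ℝ)+1 := by positivity
    set u : ℝ := s/((n:ℝ)+1) with hu
    have hu0 : 0 < u := by positivity
    have hratio : ((n:ℝ)+1+s)/((n:ℝ)+1) = 1 + u := by rw [hu]; field_simp
    have h1 : Real.log (1+u) ≤ u := by
      have := Real.log_le_sub_one_of_pos (by linarith : (0:ℝ) < 1+u)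
      linarith
    have h2 : u/(1+u) ≤ Real.log (1+u) := by
      have h3 := Real.log_le_sub_one_of_pos (by positivity : (0:ℝ) < (1+u)⁻¹)
      rw [Real.log_inv] at h3
      have : 1 - (1+u)⁻¹ = u/(1+u) := by field_simp; ring
      linarith
    have hfn : f n = u - Real.log (1+u) := by rw [hf]; simp only [hratio, hu]
    constructor
    · rw [hfn]; linarith
    · rw [hfn]
      have husq : u^2 = s^2 * (1/((n:ℝ)+1)^2) := by rw [hu]; field_simp
      have : u - Real.log (1+u) ≤ u^2 := by
        have hq : u - u/(1+u) = u^2/(1+u) := by field_simp; ring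
        have : u^2/(1+u) ≤ u^2 := by
          apply _root_.div_le_self (by positivity) (by linarith)
        linarith
      linarith [husq]
  have hsummable : Summable f := by
    apply Summable.of_nonneg_of_le (fun n => (hbound n).1) (fun n => (hbound n).2)
    apply Summable.mul_left
    have h := (summable_one_div_nat_pow (p := 2)).2 one_lt_two
    exact (summable_nat_add_iff 1).2 h |>.congr (fun n => by push_cast; ring)
  -- partial sums
  have key : Tendsto (fun N => ∑ n ∈ Finset.range N, f n) atTop
      (𝓝 (Real.log (Real.Gamma (1+s)) + Real.eulerMascheroniConstant * s)) := by
    have hGpos : 0 < Real.Gamma (1+s) := Real.Gamma_pos_of_pos (by linarith)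
    set D : ℕ → ℝ := fun N => ∏ n ∈ Finset.range N, ((n:ℝ)+1+s) with hD
    have hDpos : ∀ N, 0 < D N := by
      intro N; rw [hD]
      exact Finset.prod_pos (fun n _ => by positivity)
    have hfact : ∀ N : ℕ, (0:ℝ) < ((Nat.factorial N : ℕ) : ℝ) := fun N => by positivity
    -- identity for partial sums
    have hident : ∀ N : ℕ, 1 ≤ N → ∑ n ∈ Finset.range N, f n =
        s * ((harmonic N : ℝ) - Real.log N) +
          Real.log ((N:ℝ) ^ s * ((Nat.factorial N : ℕ) : ℝ) / D N) := by
      intro N hN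
      have hNpos : (0:ℝ) < N := by exact_mod_cast hN
      have hsum1 : ∑ n ∈ Finset.range N, s/((n:ℝ)+1) = s * (harmonic N : ℝ) := by
        rw [harmonic]
        push_cast
        rw [Finset.mul_sum]
        exact Finset.sum_congr rfl (fun n _ => by field_simp)
      have hsum2 : ∑ n ∈ Finset.range N, Real.log (((n:ℝ)+1+s)/((n:ℝ)+1)) =
          Real.log (D N) - Real.log ((Nat.factorial N : ℕ) : ℝ) := by
        have e1 : ∀ n ∈ Finset.range N, Real.log (((n:ℝ)+1+s)/((n:ℝ)+1)) =
            Real.log ((n:ℝ)+1+s) - Real.log ((n:ℝ)+1) := by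
          intro n _
          exact Real.log_div (by positivity) (by positivity)
        rw [Finset.sum_congr rfl e1, Finset.sum_sub_distrib]
        congr 1
        · rw [hD, Real.log_prod]
          exact fun n _ => by positivity
        · have hc : ((Nat.factorial N : ℕ) : ℝ) = ∏ n ∈ Finset.range N, ((n:ℝ)+1) := by
            rw [← Finset.prod_range_add_one_eq_factorial]
            push_cast
            ring
          rw [hc, Real.log_prod]
          exact fun n _ => by positivity
      have hsum3 : Real.log ((N:ℝ) ^ s * ((Nat.factorial N : ℕ) : ℝ) / D N) =
          s * Real.log N + Real.log ((Nat.factorial N : ℕ) : ℝ) - Real.log (D N) := by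
        rw [Real.log_div (by positivity) (hDpos N).ne', Real.log_mul (by positivity)
          (hfact N).ne', Real.log_rpow hNpos]
      rw [Finset.sum_sub_distrib, hsum1, hsum2, hsum3]
      ring
    -- express in terms of GammaSeq
    have hQ : ∀ N : ℕ, 1 ≤ N → (N:ℝ) ^ s * ((Nat.factorial N : ℕ) : ℝ) / D N =
        Real.GammaSeq (1+s) N * ((1+s+(N:ℝ))/(N:ℝ)) := by
      intro N hN
      have hNpos : (0:ℝ) < N := by exact_mod_cast hN
      rw [Real.GammaSeq]
      have hprod : ∏ j ∈ Finset.range (N + 1), (1+s+(j:ℝ)) = D N * (1+s+(N:ℝ)) := by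
        rw [Finset.prod_range_succ, hD]
        congr 1
        exact Finset.prod_congr rfl (fun n _ => by ring)
      rw [hprod, Real.rpow_add hNpos, Real.rpow_one]
      have h1 : (0:ℝ) < 1+s+(N:ℝ) := by positivity
      field_simp
    have hQlim : Tendsto (fun N : ℕ => Real.GammaSeq (1+s) N * ((1+s+(N:ℝ))/(N:ℝ)))
        atTop (𝓝 (Real.Gamma (1+s))) := by
      have h1 := Real.GammaSeq_tendsto_Gamma (1+s)
      have h2 : Tendsto (fun N : ℕ => (1+s+(N:ℝ))/(N:ℝ)) atTop (𝓝 1) := by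
        have h3 : Tendsto (fun N : ℕ => (1+s)/(N:ℝ) + 1) atTop (𝓝 (0 + 1)) := by
          exact (tendsto_const_div_atTop_nhds_zero_nat (1+s)).add tendsto_const_nhds
        rw [zero_add] at h3
        apply h3.congr'
        filter_upwards [eventually_gt_atTop 0] with N hN
        have : (0:ℝ) < N := by exact_mod_cast hN
        field_simp
      simpa using h1.mul h2
    have hloglim : Tendsto (fun N : ℕ => Real.log (Real.GammaSeq (1+s) N * ((1+s+(N:ℝ))/(N:ℝ))))
        atTop (𝓝 (Real.log (Real.Gamma (1+s)))) :=
      ((Real.continuousAt_log hGpos.ne').tendsto).comp hQlim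
    have hhar : Tendsto (fun N : ℕ => s * ((harmonic N : ℝ) - Real.log N)) atTop
        (𝓝 (s * Real.eulerMascheroniConstant)) :=
      Real.tendsto_harmonic_sub_log.const_mul s
    have := hhar.add hloglim
    rw [show s * Real.eulerMascheroniConstant + Real.log (Real.Gamma (1+s)) =
      Real.log (Real.Gamma (1+s)) + Real.eulerMascheroniConstant * s by ring] at this
    apply this.congr'
    filter_upwards [eventually_ge_atTop 1] with N hN
    rw [hident N hN, hQ N hN]
  have h1 : HasSum f (∑' n, f n) := hsummable.hasSum
  have h2 := h1.tendsto_sum_nat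
  have h3 := tendsto_nhds_unique h2 key
  rwa [h3] at h1

lemma pointwise_tsum {s x : ℝ} (hx : 0 < x) :
    ∑' n : ℕ, (Real.exp (-(s*x)) - 1 + s*x) * Real.exp (-(((n:ℝ)+1) * x)) / x
      = (Real.exp (-s * x) - 1 + s * x) / (x * (Real.exp x - 1)) := by
  set r : ℝ := Real.exp (-x) with hr
  have hr0 : 0 ≤ r := (Real.exp_pos _).le
  have hr1 : r < 1 := by
    rw [hr, Real.exp_lt_one_iff]; linarith
  have hterm : ∀ n : ℕ, (Real.exp (-(s*x)) - 1 + s*x) * Real.exp (-(((n:ℝ)+1) * x)) / x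
      = ((Real.exp (-(s*x)) - 1 + s*x) / x * r) * r ^ n := by
    intro n
    have : Real.exp (-(((n:ℝ)+1) * x)) = r ^ (n+1) := by
      rw [hr, ← Real.exp_nat_mul]
      congr 1
      push_cast
      ring
    rw [this, pow_succ]
    ring
  rw [tsum_congr hterm, tsum_mul_left, tsum_geometric_of_lt_one hr0 hr1]
  have hx0 : x ≠ 0 := hx.ne'
  have hrne : 1 - r ≠ 0 := by linarith
  have hexp1 : Real.exp x - 1 ≠ 0 := by
    have : 1 < Real.exp x := by rw [← Real.exp_zero]; exact Real.exp_lt_exp.2 hx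
    linarith
  have hrexp : r * Real.exp x = 1 := by
    rw [hr, ← Real.exp_add]; simp
  have hneg : Real.exp (-s * x) = Real.exp (-(s*x)) := by rw [neg_mul]
  rw [hneg]
  field_simp
  linear_combination (Real.exp (-(s*x)) - 1 + s*x) * hrexp

/-- Malmsten-type formula: for every `s > 0`,
`log Γ(1+s) = −γ s + ∫₀^∞ (e^{−sx} − 1 + sx)/(x(eˣ−1)) dx`. -/
theorem log_Gamma_malmsten (s : ℝ) (hs : 0 < s) :
    Real.log (Real.Gamma (1 + s)) =
      -Real.eulerMascheroniConstant * s +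
        ∫ x in Set.Ioi (0:ℝ),
          (Real.exp (-s * x) - 1 + s * x) / (x * (Real.exp x - 1)) := by
  set F : ℕ → ℝ → ℝ := fun n x =>
    (Real.exp (-(s*x)) - 1 + s*x) * Real.exp (-(((n:ℝ)+1) * x)) / x with hF
  have hb : ∀ n : ℕ, (0:ℝ) < (n:ℝ)+1 := fun n => by positivity
  have hInt : ∀ n : ℕ, IntegrableOn (F n) (Ioi (0:ℝ)) := fun n => (term_eval hs (hb n)).1
  have hVal : ∀ n : ℕ, ∫ x in Ioi (0:ℝ), F n x
      = s/((n:ℝ)+1) - Real.log (((n:ℝ)+1+s)/((n:ℝ)+1)) := by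
    intro n
    have := (term_eval hs (hb n)).2
    convert this using 3
  have hnonneg : ∀ n : ℕ, ∀ x ∈ Ioi (0:ℝ), 0 ≤ F n x := by
    intro n x hx
    have hx0 : (0:ℝ) < x := hx
    have h1 : 0 ≤ Real.exp (-(s*x)) - 1 + s*x := by
      have := Real.add_one_le_exp (-(s*x))
      linarith
    have := mul_nonneg h1 (Real.exp_pos (-(((n:ℝ)+1) * x))).le
    positivity
  have hnorm : ∀ n : ℕ, ∫ x in Ioi (0:ℝ), ‖F n x‖ = ∫ x in Ioi (0:ℝ), F n x :=
    fun n => setIntegral_congr_fun measurableSet_Ioi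
      (fun x hx => norm_of_nonneg (hnonneg n x hx))
  have hS := series_eval hs
  have hSummable : Summable (fun n : ℕ => ∫ x in Ioi (0:ℝ), ‖F n x‖) := by
    apply Summable.congr hS.summable
    intro n
    rw [hnorm n, hVal n]
  have hswap := MeasureTheory.integral_tsum_of_summable_integral_norm hInt hSummable
  have hpt : ∫ x in Ioi (0:ℝ), (∑' n : ℕ, F n x)
      = ∫ x in Ioi (0:ℝ), (Real.exp (-s * x) - 1 + s * x) / (x * (Real.exp x - 1)) :=
    setIntegral_congr_fun measurableSet_Ioi (fun x hx => pointwise_tsum hx)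
  have hsum : ∑' n : ℕ, ∫ x in Ioi (0:ℝ), F n x
      = Real.log (Real.Gamma (1+s)) + Real.eulerMascheroniConstant * s := by
    rw [tsum_congr hVal, hS.tsum_eq]
  rw [← hpt, ← hswap, hsum]
  ring
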